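/- Let G be a finite graph with nonnegative real edge weights containing an urban-renewal patch with weights w, x, y, z satisfying wz + xy ≠ 0, and let G' be the urban-renewed graph. Then the total weight of the perfect matchings of G that contain the pendant edges aA and bB but contain neither cC nor dD equals (wz + xy) times the total weight of the perfect matchings of G' that contain the edge AB but not the edge CD. -/

import Mathlib

open scoped Classical

/-- A finset `M` of edges is a perfect matching of the graph `G` relative to the
vertex set `S`: every edge of `M` is an edge of `G`, and every vertex of `S`
belongs to exactly one edge of `M`. -/
def IsPM {V : Type} (G : SimpleGraph V) (S : Set V) (M : Finset (Sym2 V)) : Prop :=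
  (∀ e ∈ M, e ∈ G.edgeSet) ∧ ∀ v ∈ S, ∃! e, e ∈ M ∧ v ∈ e

/-- `mSum G S ω` is the sum, over all perfect matchings `M` of `G` relative to the
vertex set `S`, of the product of the `ω`-weights of the edges of `M`. -/
noncomputable def mSum {V : Type} (G : SimpleGraph V) (S : Set V) (ω : Sym2 V → ℝ) : ℝ :=
  ∑ᶠ M ∈ {M : Finset (Sym2 V) | IsPM G S M}, ∏ e ∈ M, ω e

/-- `G` together with the weights `ω` contains an urban-renewal patch on the eight
distinct vertices `A B C D a b c d`, with inner-edge weights `w x y z` and pendant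
edges `aA, bB, cC, dD` of weight `1`. -/
structure UrbanPatch {V : Type} (G : SimpleGraph V) (ω : Sym2 V → ℝ)
    (A B C D a b c d : V) (w x y z : ℝ) : Prop where
  distinct : List.Pairwise (· ≠ ·) [A, B, C, D, a, b, c, d]
  adj_a : ∀ v, G.Adj a v ↔ v = b ∨ v = c ∨ v = A
  adj_b : ∀ v, G.Adj b v ↔ v = a ∨ v = d ∨ v = B
  adj_c : ∀ v, G.Adj c v ↔ v = a ∨ v = d ∨ v = C
  adj_d : ∀ v, G.Adj d v ↔ v = b ∨ v = c ∨ v = D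
  wt_ab : ω s(a, b) = w
  wt_ac : ω s(a, c) = x
  wt_bd : ω s(b, d) = y
  wt_cd : ω s(c, d) = z
  wt_aA : ω s(a, A) = 1
  wt_bB : ω s(b, B) = 1
  wt_cC : ω s(c, C) = 1
  wt_dD : ω s(d, D) = 1
  nonadj_AB : ¬ G.Adj A B
  nonadj_AC : ¬ G.Adj A C
  nonadj_AD : ¬ G.Adj A D
  nonadj_BC : ¬ G.Adj B C
  nonadj_BD : ¬ G.Adj B D
  nonadj_CD : ¬ G.Adj C D

/-- The urban-renewed graph: delete the four inner vertices `a b c d` together with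
all their incident edges, and add the four new edges `AB, AC, BD, CD`. -/
def renewGraph {V : Type} (G : SimpleGraph V) (A B C D a b c d : V) : SimpleGraph V :=
  SimpleGraph.fromRel fun u v =>
    (G.Adj u v ∧ u ∉ ({a, b, c, d} : Set V) ∧ v ∉ ({a, b, c, d} : Set V)) ∨
    (u = A ∧ v = B) ∨ (u = A ∧ v = C) ∨ (u = B ∧ v = D) ∨ (u = C ∧ v = D)

/-- The urban-renewed weights: the new edges `AB, AC, BD, CD` get weights
`z/(wz+xy), y/(wz+xy), x/(wz+xy), w/(wz+xy)`; other edges keep their weights. -/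
noncomputable def renewWeight {V : Type} (ω : Sym2 V → ℝ) (A B C D : V)
    (w x y z : ℝ) : Sym2 V → ℝ := fun e =>
  if e = s(A, B) then z / (w * z + x * y)
  else if e = s(A, C) then y / (w * z + x * y)
  else if e = s(B, D) then x / (w * z + x * y)
  else if e = s(C, D) then w / (w * z + x * y)
  else ω e


/-- `mSumP G S ω P` is the sum, over all perfect matchings `M` of `G` relative to
the vertex set `S` that moreover satisfy the predicate `P`, of the product of the
`ω`-weights of the edges of `M`. -/
noncomputable def mSumP {V : Type} (G : SimpleGraph V) (S : Set V) (ω : Sym2 V → ℝ)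
    (P : Finset (Sym2 V) → Prop) : ℝ :=
  ∑ᶠ M ∈ {M : Finset (Sym2 V) | IsPM G S M ∧ P M}, ∏ e ∈ M, ω e


section Helpers

lemma edge_shape {V : Type} {G : SimpleGraph V} {p q₁ q₂ q₃ : V}
    (hadj : ∀ v, G.Adj p v ↔ v = q₁ ∨ v = q₂ ∨ v = q₃) {e : Sym2 V}
    (he : e ∈ G.edgeSet) (hpe : p ∈ e) : e = s(p,q₁) ∨ e = s(p,q₂) ∨ e = s(p,q₃) := by
  induction e with
  | h u v =>
    rw [Sym2.mem_iff] at hpe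
    rw [SimpleGraph.mem_edgeSet] at he
    rcases hpe with rfl | rfl
    · rcases (hadj v).1 he with rfl | rfl | rfl
      · exact Or.inl rfl
      · exact Or.inr (Or.inl rfl)
      · exact Or.inr (Or.inr rfl)
    · rcases (hadj u).1 he.symm with rfl | rfl | rfl
      · exact Or.inl Sym2.eq_swap
      · exact Or.inr (Or.inl Sym2.eq_swap)
      · exact Or.inr (Or.inr Sym2.eq_swap)

lemma uniq_edge {V : Type} {M : Finset (Sym2 V)} {S : Set V} {G : SimpleGraph V}
    (h : IsPM G S M) {v : V} (hv : v ∈ S)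
    {e e' : Sym2 V} (he : e ∈ M) (hve : v ∈ e) (he' : e' ∈ M) (hve' : v ∈ e') : e = e' := by
  obtain ⟨-, h2⟩ := h
  obtain ⟨e₀, -, hu⟩ := h2 v hv
  rw [hu e ⟨he, hve⟩, hu e' ⟨he', hve'⟩]

lemma mSumP_eq_sum' {V : Type} [Fintype V] (G : SimpleGraph V) (S : Set V) (ω : Sym2 V → ℝ)
    (P : Finset (Sym2 V) → Prop) :
    mSumP G S ω P
      = ∑ M ∈ (Set.toFinite {M : Finset (Sym2 V) | IsPM G S M ∧ P M}).toFinset,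
          ∏ e ∈ M, ω e := by
  rw [mSumP, ← finsum_mem_coe_finset, Set.Finite.coe_toFinset]

end Helpers

set_option maxHeartbeats 4000000 in
theorem urban_renewal_case_AB {V : Type} [Fintype V] (G : SimpleGraph V) (ω : Sym2 V → ℝ)
    (A B C D a b c d : V) (w x y z : ℝ)
    (hnonneg : ∀ e ∈ G.edgeSet, 0 ≤ ω e)
    (hpatch : UrbanPatch G ω A B C D a b c d w x y z)
    (hwz : w * z + x * y ≠ 0) :
    mSumP G Set.univ ω
        (fun M => s(a, A) ∈ M ∧ s(b, B) ∈ M ∧ s(c, C) ∉ M ∧ s(d, D) ∉ M)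
      = (w * z + x * y) *
        mSumP (renewGraph G A B C D a b c d) (Set.univ \ {a, b, c, d})
          (renewWeight ω A B C D w x y z)
          (fun M => s(A, B) ∈ M ∧ s(C, D) ∉ M) := by
  classical
  obtain ⟨hdist, adj_a, adj_b, adj_c, adj_d, wab, wac, wbd, wcd, waA, wbB, wcC, wdD,
    nAB, nAC, nAD, nBC, nBD, nCD⟩ := hpatch
  simp only [List.pairwise_cons, List.mem_cons, List.not_mem_nil, List.mem_singleton] at hdist
  obtain ⟨p1, p2, p3, p4, p5, p6, p7, -⟩ := hdist
  have dAB : A ≠ B := p1 _ (by tauto)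
  have dAC : A ≠ C := p1 _ (by tauto)
  have dAD : A ≠ D := p1 _ (by tauto)
  have dAa : A ≠ a := p1 _ (by tauto)
  have dAb : A ≠ b := p1 _ (by tauto)
  have dAc : A ≠ c := p1 _ (by tauto)
  have dAd : A ≠ d := p1 _ (by tauto)
  have dBC : B ≠ C := p2 _ (by tauto)
  have dBD : B ≠ D := p2 _ (by tauto)
  have dBa : B ≠ a := p2 _ (by tauto)
  have dBb : B ≠ b := p2 _ (by tauto)
  have dBc : B ≠ c := p2 _ (by tauto)
  have dBd : B ≠ d := p2 _ (by tauto)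
  have dCD : C ≠ D := p3 _ (by tauto)
  have dCa : C ≠ a := p3 _ (by tauto)
  have dCb : C ≠ b := p3 _ (by tauto)
  have dCc : C ≠ c := p3 _ (by tauto)
  have dCd : C ≠ d := p3 _ (by tauto)
  have dDa : D ≠ a := p4 _ (by tauto)
  have dDb : D ≠ b := p4 _ (by tauto)
  have dDc : D ≠ c := p4 _ (by tauto)
  have dDd : D ≠ d := p4 _ (by tauto)
  have dab : a ≠ b := p5 _ (by tauto)
  have dac : a ≠ c := p5 _ (by tauto)
  have dad : a ≠ d := p5 _ (by tauto)
  have dbc : b ≠ c := p6 _ (by tauto)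
  have dbd : b ≠ d := p6 _ (by tauto)
  have dcd : c ≠ d := p7 _ (by tauto)
  -- Sym2 inequalities
  have eaAbB : s(a,A) ≠ s(b,B) := by
    intro hq; rw [Sym2.eq_iff] at hq; rcases hq with (⟨h,-⟩|⟨-,h⟩); exacts [dab h, dAb h]
  have eaAcd : s(a,A) ≠ s(c,d) := by
    intro hq; rw [Sym2.eq_iff] at hq; rcases hq with (⟨h,-⟩|⟨h,-⟩); exacts [dac h, dad h]
  have ebBcd : s(b,B) ≠ s(c,d) := by
    intro hq; rw [Sym2.eq_iff] at hq; rcases hq with (⟨h,-⟩|⟨h,-⟩); exacts [dbc h, dbd h]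
  have ecCaA : s(c,C) ≠ s(a,A) := by
    intro hq; rw [Sym2.eq_iff] at hq; rcases hq with (⟨h,-⟩|⟨h,-⟩); exacts [dac h.symm, dAc h.symm]
  have ecCbB : s(c,C) ≠ s(b,B) := by
    intro hq; rw [Sym2.eq_iff] at hq; rcases hq with (⟨h,-⟩|⟨h,-⟩); exacts [dbc h.symm, dBc h.symm]
  have ecCcd : s(c,C) ≠ s(c,d) := by
    intro hq; rw [Sym2.eq_iff] at hq; rcases hq with (⟨-,h⟩|⟨h,-⟩); exacts [dCd h, dcd h]
  have edDaA : s(d,D) ≠ s(a,A) := by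
    intro hq; rw [Sym2.eq_iff] at hq; rcases hq with (⟨h,-⟩|⟨h,-⟩); exacts [dad h.symm, dAd h.symm]
  have edDbB : s(d,D) ≠ s(b,B) := by
    intro hq; rw [Sym2.eq_iff] at hq; rcases hq with (⟨h,-⟩|⟨h,-⟩); exacts [dbd h.symm, dBd h.symm]
  have edDcd : s(d,D) ≠ s(c,d) := by
    intro hq; rw [Sym2.eq_iff] at hq; rcases hq with (⟨h,-⟩|⟨-,h⟩); exacts [dcd h.symm, dDc h]
  have eCDAB : s(C,D) ≠ s(A,B) := by
    intro hq; rw [Sym2.eq_iff] at hq; rcases hq with (⟨h,-⟩|⟨h,-⟩); exacts [dAC h.symm, dBC h.symm]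
  -- basic edge facts
  have gaA : s(a,A) ∈ G.edgeSet := by rw [SimpleGraph.mem_edgeSet, adj_a]; tauto
  have gbB : s(b,B) ∈ G.edgeSet := by rw [SimpleGraph.mem_edgeSet, adj_b]; tauto
  have gcd : s(c,d) ∈ G.edgeSet := by rw [SimpleGraph.mem_edgeSet, adj_c]; tauto
  have adjOf : ∀ (u u' : V), s(u,u') ∈ G.edgeSet → G.Adj u u' := by
    intro u u' h
    rwa [SimpleGraph.mem_edgeSet] at h
  -- renewed graph edge facts
  have hG'AB : s(A,B) ∈ (renewGraph G A B C D a b c d).edgeSet := by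
    rw [SimpleGraph.mem_edgeSet]
    show (SimpleGraph.fromRel _).Adj A B
    rw [SimpleGraph.fromRel_adj]
    exact ⟨dAB, Or.inl (Or.inr (Or.inl ⟨rfl, rfl⟩))⟩
  have hGtoG' : ∀ e ∈ G.edgeSet, (∀ v ∈ e, v ≠ a ∧ v ≠ b ∧ v ≠ c ∧ v ≠ d) →
      e ∈ (renewGraph G A B C D a b c d).edgeSet := by
    intro e
    induction e with
    | h u v =>
      intro he hav
      rw [SimpleGraph.mem_edgeSet] at he
      rw [SimpleGraph.mem_edgeSet]
      show (SimpleGraph.fromRel _).Adj u v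
      rw [SimpleGraph.fromRel_adj]
      obtain ⟨hu1,hu2,hu3,hu4⟩ := hav u (by rw [Sym2.mem_iff]; tauto)
      obtain ⟨hv1,hv2,hv3,hv4⟩ := hav v (by rw [Sym2.mem_iff]; tauto)
      refine ⟨he.ne, Or.inl (Or.inl ⟨he, ?_, ?_⟩)⟩
      · simp only [Set.mem_insert_iff, Set.mem_singleton_iff]
        push_neg
        exact ⟨hu1, hu2, hu3, hu4⟩
      · simp only [Set.mem_insert_iff, Set.mem_singleton_iff]
        push_neg
        exact ⟨hv1, hv2, hv3, hv4⟩
  have hG'edge : ∀ e ∈ (renewGraph G A B C D a b c d).edgeSet,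
      (e ∈ G.edgeSet ∧ ∀ v ∈ e, v ≠ a ∧ v ≠ b ∧ v ≠ c ∧ v ≠ d) ∨
      e = s(A,B) ∨ e = s(A,C) ∨ e = s(B,D) ∨ e = s(C,D) := by
    intro e
    induction e with
    | h u v =>
      intro he
      rw [SimpleGraph.mem_edgeSet] at he
      have he' : (SimpleGraph.fromRel _).Adj u v := he
      rw [SimpleGraph.fromRel_adj] at he'
      obtain ⟨hne, hrel⟩ := he'
      have key : ∀ u' v' : V,
          ((G.Adj u' v' ∧ u' ∉ ({a, b, c, d} : Set V) ∧ v' ∉ ({a, b, c, d} : Set V)) ∨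
            (u' = A ∧ v' = B) ∨ (u' = A ∧ v' = C) ∨ (u' = B ∧ v' = D) ∨ (u' = C ∧ v' = D)) →
          (s(u',v') ∈ G.edgeSet ∧ ∀ t ∈ s(u',v'), t ≠ a ∧ t ≠ b ∧ t ≠ c ∧ t ≠ d) ∨
          s(u',v') = s(A,B) ∨ s(u',v') = s(A,C) ∨ s(u',v') = s(B,D) ∨ s(u',v') = s(C,D) := by
        intro u' v' h
        rcases h with ⟨hadj, hu, hv⟩ | ⟨rfl,rfl⟩ | ⟨rfl,rfl⟩ | ⟨rfl,rfl⟩ | ⟨rfl,rfl⟩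
        · left
          simp only [Set.mem_insert_iff, Set.mem_singleton_iff] at hu hv
          push_neg at hu hv
          refine ⟨hadj, ?_⟩
          intro t ht
          rw [Sym2.mem_iff] at ht
          rcases ht with rfl | rfl
          · exact hu
          · exact hv
        · exact Or.inr (Or.inl rfl)
        · exact Or.inr (Or.inr (Or.inl rfl))
        · exact Or.inr (Or.inr (Or.inr (Or.inl rfl)))
        · exact Or.inr (Or.inr (Or.inr (Or.inr rfl)))
      rcases hrel with h | h
      · exact key u v h
      · have := key v u h
        rw [Sym2.eq_swap (a := v) (b := u)] at this
        exact this
  -- structure of matchings on the left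
  have hLstruct : ∀ M : Finset (Sym2 V), IsPM G Set.univ M → s(a,A) ∈ M → s(b,B) ∈ M →
      s(c,C) ∉ M → s(d,D) ∉ M →
      s(c,d) ∈ M ∧ ∀ e ∈ M, e ≠ s(a,A) → e ≠ s(b,B) → e ≠ s(c,d) →
        (∀ v ∈ e, v ≠ a ∧ v ≠ b ∧ v ≠ c ∧ v ≠ d ∧ v ≠ A ∧ v ≠ B) := by
    intro M hPM haA hbB hcC hdD
    obtain ⟨hedges, huni⟩ := id hPM
    obtain ⟨e₀, ⟨he₀M, hce₀⟩, -⟩ := huni c (Set.mem_univ c)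
    have hcd : s(c,d) ∈ M := by
      rcases edge_shape adj_c (hedges e₀ he₀M) hce₀ with rfl | rfl | rfl
      · exfalso
        have heq : s(c,a) = s(a,A) :=
          uniq_edge hPM (Set.mem_univ a) he₀M (by rw [Sym2.mem_iff]; tauto) haA
            (by rw [Sym2.mem_iff]; tauto)
        rw [Sym2.eq_iff] at heq
        rcases heq with ⟨h,-⟩|⟨h,-⟩
        · exact dac h.symm
        · exact dAc h.symm
      · exact he₀M
      · exact absurd he₀M hcC
    refine ⟨hcd, fun e heM h1 h2 h3 v hv => ?_⟩
    refine ⟨?_, ?_, ?_, ?_, ?_, ?_⟩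
    · rintro rfl
      exact h1 (uniq_edge hPM (Set.mem_univ v) heM hv haA (by rw [Sym2.mem_iff]; tauto))
    · rintro rfl
      exact h2 (uniq_edge hPM (Set.mem_univ v) heM hv hbB (by rw [Sym2.mem_iff]; tauto))
    · rintro rfl
      exact h3 (uniq_edge hPM (Set.mem_univ v) heM hv hcd (by rw [Sym2.mem_iff]; tauto))
    · rintro rfl
      exact h3 (uniq_edge hPM (Set.mem_univ v) heM hv hcd (by rw [Sym2.mem_iff]; tauto))
    · rintro rfl
      exact h1 (uniq_edge hPM (Set.mem_univ v) heM hv haA (by rw [Sym2.mem_iff]; tauto))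
    · rintro rfl
      exact h2 (uniq_edge hPM (Set.mem_univ v) heM hv hbB (by rw [Sym2.mem_iff]; tauto))
  have hAmem : A ∈ Set.univ \ ({a,b,c,d} : Set V) := by
    refine ⟨trivial, ?_⟩
    simp only [Set.mem_insert_iff, Set.mem_singleton_iff]
    push_neg
    exact ⟨dAa, dAb, dAc, dAd⟩
  have hBmem : B ∈ Set.univ \ ({a,b,c,d} : Set V) := by
    refine ⟨trivial, ?_⟩
    simp only [Set.mem_insert_iff, Set.mem_singleton_iff]
    push_neg
    exact ⟨dBa, dBb, dBc, dBd⟩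
  -- structure of matchings on the right
  have hRstruct : ∀ N : Finset (Sym2 V),
      IsPM (renewGraph G A B C D a b c d) (Set.univ \ {a,b,c,d}) N →
      s(A,B) ∈ N → s(C,D) ∉ N →
      ∀ e ∈ N, e ≠ s(A,B) →
        e ∈ G.edgeSet ∧ ∀ v ∈ e, v ≠ a ∧ v ≠ b ∧ v ≠ c ∧ v ≠ d ∧ v ≠ A ∧ v ≠ B := by
    intro N hPM hAB hCD e heN hne
    obtain ⟨hedges, huni⟩ := id hPM
    rcases hG'edge e (hedges e heN) with ⟨heG, hav⟩ | rfl | rfl | rfl | rfl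
    · refine ⟨heG, fun v hv => ?_⟩
      obtain ⟨h1,h2,h3,h4⟩ := hav v hv
      refine ⟨h1, h2, h3, h4, ?_, ?_⟩
      · rintro rfl
        exact hne (uniq_edge hPM hAmem heN hv hAB (by rw [Sym2.mem_iff]; tauto))
      · rintro rfl
        exact hne (uniq_edge hPM hBmem heN hv hAB (by rw [Sym2.mem_iff]; tauto))
    · exact absurd rfl hne
    · exfalso
      have heq : s(A,C) = s(A,B) :=
        uniq_edge hPM hAmem heN (by rw [Sym2.mem_iff]; tauto) hAB (by rw [Sym2.mem_iff]; tauto)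
      rw [Sym2.eq_iff] at heq
      rcases heq with ⟨-,h⟩|⟨h,-⟩
      · exact dBC h.symm
      · exact dAB h
    · exfalso
      have heq : s(B,D) = s(A,B) :=
        uniq_edge hPM hBmem heN (by rw [Sym2.mem_iff]; tauto) hAB (by rw [Sym2.mem_iff]; tauto)
      rw [Sym2.eq_iff] at heq
      rcases heq with ⟨h,-⟩|⟨-,h⟩
      · exact dAB h.symm
      · exact dAD h.symm
    · exact absurd heN hCD
  rw [mSumP_eq_sum', mSumP_eq_sum', Finset.mul_sum]
  refine Finset.sum_bij'
    (fun M _ => insert s(A,B) (((M.erase s(a,A)).erase s(b,B)).erase s(c,d)))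
    (fun N _ => insert s(a,A) (insert s(b,B) (insert s(c,d) (N.erase s(A,B)))))
    ?_ ?_ ?_ ?_ ?_
  · -- hi : image lands in the right-hand set
    intro M hM
    simp only [Set.Finite.mem_toFinset, Set.mem_setOf_eq] at hM ⊢
    obtain ⟨hPM, haA, hbB, hcC, hdD⟩ := hM
    obtain ⟨hcd, houter⟩ := hLstruct M hPM haA hbB hcC hdD
    obtain ⟨hedges, huni⟩ := id hPM
    have hmemR : ∀ e, e ∈ ((M.erase s(a,A)).erase s(b,B)).erase s(c,d) ↔
        e ∈ M ∧ e ≠ s(a,A) ∧ e ≠ s(b,B) ∧ e ≠ s(c,d) := by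
      intro e
      simp only [Finset.mem_erase]
      tauto
    have hRout : ∀ e ∈ ((M.erase s(a,A)).erase s(b,B)).erase s(c,d),
        ∀ v ∈ e, v ≠ a ∧ v ≠ b ∧ v ≠ c ∧ v ≠ d ∧ v ≠ A ∧ v ≠ B := by
      intro e he
      obtain ⟨h0,h1,h2,h3⟩ := (hmemR e).1 he
      exact houter e h0 h1 h2 h3
    refine ⟨⟨?_, ?_⟩, Finset.mem_insert_self _ _, ?_⟩
    · -- edges
      intro e he
      rcases Finset.mem_insert.1 he with rfl | heR
      · exact hG'AB
      · refine hGtoG' e (hedges e ((hmemR e).1 heR).1) ?_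
        intro v hv
        obtain ⟨q1,q2,q3,q4,-,-⟩ := hRout e heR v hv
        exact ⟨q1,q2,q3,q4⟩
    · -- uniqueness
      intro v hv
      obtain ⟨-, hvI⟩ := hv
      simp only [Set.mem_insert_iff, Set.mem_singleton_iff] at hvI
      push_neg at hvI
      obtain ⟨hva, hvb, hvc, hvd⟩ := hvI
      by_cases hvA : v = A
      · subst v
        refine ⟨s(A,B), ⟨Finset.mem_insert_self _ _, by rw [Sym2.mem_iff]; tauto⟩, ?_⟩
        rintro e ⟨heM', hA⟩
        rcases Finset.mem_insert.1 heM' with rfl | heR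
        · rfl
        · exact absurd rfl ((hRout e heR A hA).2.2.2.2.1)
      · by_cases hvB : v = B
        · subst v
          refine ⟨s(A,B), ⟨Finset.mem_insert_self _ _, by rw [Sym2.mem_iff]; tauto⟩, ?_⟩
          rintro e ⟨heM', hB⟩
          rcases Finset.mem_insert.1 heM' with rfl | heR
          · rfl
          · exact absurd rfl ((hRout e heR B hB).2.2.2.2.2)
        · obtain ⟨e, ⟨heM, hve⟩, -⟩ := huni v (Set.mem_univ v)
          have h1 : e ≠ s(a,A) := by
            rintro rfl; rw [Sym2.mem_iff] at hve; tauto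
          have h2 : e ≠ s(b,B) := by
            rintro rfl; rw [Sym2.mem_iff] at hve; tauto
          have h3 : e ≠ s(c,d) := by
            rintro rfl; rw [Sym2.mem_iff] at hve; tauto
          have heR : e ∈ ((M.erase s(a,A)).erase s(b,B)).erase s(c,d) :=
            (hmemR e).2 ⟨heM, h1, h2, h3⟩
          refine ⟨e, ⟨Finset.mem_insert_of_mem heR, hve⟩, ?_⟩
          rintro e' ⟨he', hve'⟩
          rcases Finset.mem_insert.1 he' with rfl | he'R
          · rw [Sym2.mem_iff] at hve'; tauto
          · exact uniq_edge hPM (Set.mem_univ v) ((hmemR e').1 he'R).1 hve' heM hve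
    · -- s(C,D) not in the image
      intro hCDmem
      rcases Finset.mem_insert.1 hCDmem with heq | hCDR
      · exact eCDAB heq
      · exact nCD (adjOf _ _ (hedges _ ((hmemR _).1 hCDR).1))
  · -- hj : preimage lands in the left-hand set
    intro N hN
    simp only [Set.Finite.mem_toFinset, Set.mem_setOf_eq] at hN ⊢
    obtain ⟨hPM, hAB, hCD⟩ := hN
    obtain ⟨hedges, huni⟩ := id hPM
    have hstr := hRstruct N hPM hAB hCD
    have hmemB : ∀ e, e ∈ insert s(a,A) (insert s(b,B) (insert s(c,d) (N.erase s(A,B)))) ↔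
        e = s(a,A) ∨ e = s(b,B) ∨ e = s(c,d) ∨ (e ∈ N ∧ e ≠ s(A,B)) := by
      intro e
      simp only [Finset.mem_insert, Finset.mem_erase]
      tauto
    refine ⟨⟨?_, ?_⟩, (hmemB _).2 (by tauto), (hmemB _).2 (by tauto), ?_, ?_⟩
    · -- edges
      intro e he
      rcases (hmemB e).1 he with rfl | rfl | rfl | ⟨heN, hne⟩
      · exact gaA
      · exact gbB
      · exact gcd
      · exact (hstr e heN hne).1
    · -- uniqueness over univ
      intro v _
      by_cases hva : v = a
      · subst v
        refine ⟨s(a,A), ⟨(hmemB _).2 (by tauto), by rw [Sym2.mem_iff]; tauto⟩, ?_⟩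
        rintro e' ⟨he', hve'⟩
        rcases (hmemB e').1 he' with rfl | rfl | rfl | ⟨heN, hne⟩
        · rfl
        · rw [Sym2.mem_iff] at hve'
          rcases hve' with h|h
          · exact absurd h dab
          · exact absurd h.symm dBa
        · rw [Sym2.mem_iff] at hve'
          rcases hve' with h|h
          · exact absurd h dac
          · exact absurd h dad
        · exact absurd rfl ((hstr e' heN hne).2 _ hve').1
      · by_cases hvA : v = A
        · subst v
          refine ⟨s(a,A), ⟨(hmemB _).2 (by tauto), by rw [Sym2.mem_iff]; tauto⟩, ?_⟩
          rintro e' ⟨he', hve'⟩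
          rcases (hmemB e').1 he' with rfl | rfl | rfl | ⟨heN, hne⟩
          · rfl
          · rw [Sym2.mem_iff] at hve'
            rcases hve' with h|h
            · exact absurd h dAb
            · exact absurd h dAB
          · rw [Sym2.mem_iff] at hve'
            rcases hve' with h|h
            · exact absurd h dAc
            · exact absurd h dAd
          · exact absurd rfl ((hstr e' heN hne).2 _ hve').2.2.2.2.1
        · by_cases hvb : v = b
          · subst v
            refine ⟨s(b,B), ⟨(hmemB _).2 (by tauto), by rw [Sym2.mem_iff]; tauto⟩, ?_⟩
            rintro e' ⟨he', hve'⟩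
            rcases (hmemB e').1 he' with rfl | rfl | rfl | ⟨heN, hne⟩
            · rw [Sym2.mem_iff] at hve'
              rcases hve' with h|h
              · exact absurd h.symm dab
              · exact absurd h.symm dAb
            · rfl
            · rw [Sym2.mem_iff] at hve'
              rcases hve' with h|h
              · exact absurd h dbc
              · exact absurd h dbd
            · exact absurd rfl ((hstr e' heN hne).2 _ hve').2.1
          · by_cases hvB : v = B
            · subst v
              refine ⟨s(b,B), ⟨(hmemB _).2 (by tauto), by rw [Sym2.mem_iff]; tauto⟩, ?_⟩
              rintro e' ⟨he', hve'⟩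
              rcases (hmemB e').1 he' with rfl | rfl | rfl | ⟨heN, hne⟩
              · rw [Sym2.mem_iff] at hve'
                rcases hve' with h|h
                · exact absurd h dBa
                · exact absurd h.symm dAB
              · rfl
              · rw [Sym2.mem_iff] at hve'
                rcases hve' with h|h
                · exact absurd h dBc
                · exact absurd h dBd
              · exact absurd rfl ((hstr e' heN hne).2 _ hve').2.2.2.2.2
            · by_cases hvc : v = c
              · subst v
                refine ⟨s(c,d), ⟨(hmemB _).2 (by tauto), by rw [Sym2.mem_iff]; tauto⟩, ?_⟩
                rintro e' ⟨he', hve'⟩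
                rcases (hmemB e').1 he' with rfl | rfl | rfl | ⟨heN, hne⟩
                · rw [Sym2.mem_iff] at hve'
                  rcases hve' with h|h
                  · exact absurd h.symm dac
                  · exact absurd h.symm dAc
                · rw [Sym2.mem_iff] at hve'
                  rcases hve' with h|h
                  · exact absurd h.symm dbc
                  · exact absurd h.symm dBc
                · rfl
                · exact absurd rfl ((hstr e' heN hne).2 _ hve').2.2.1
              · by_cases hvd : v = d
                · subst v
                  refine ⟨s(c,d), ⟨(hmemB _).2 (by tauto), by rw [Sym2.mem_iff]; tauto⟩, ?_⟩
                  rintro e' ⟨he', hve'⟩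
                  rcases (hmemB e').1 he' with rfl | rfl | rfl | ⟨heN, hne⟩
                  · rw [Sym2.mem_iff] at hve'
                    rcases hve' with h|h
                    · exact absurd h.symm dad
                    · exact absurd h.symm dAd
                  · rw [Sym2.mem_iff] at hve'
                    rcases hve' with h|h
                    · exact absurd h.symm dbd
                    · exact absurd h.symm dBd
                  · rfl
                  · exact absurd rfl ((hstr e' heN hne).2 _ hve').2.2.2.1
                · -- generic vertex
                  have hvS : v ∈ Set.univ \ ({a,b,c,d} : Set V) := by
                    refine ⟨trivial, ?_⟩
                    simp only [Set.mem_insert_iff, Set.mem_singleton_iff]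
                    push_neg
                    exact ⟨hva, hvb, hvc, hvd⟩
                  obtain ⟨e, ⟨heN, hve⟩, -⟩ := huni v hvS
                  have hne : e ≠ s(A,B) := by
                    rintro rfl
                    rw [Sym2.mem_iff] at hve
                    rcases hve with rfl|rfl
                    · exact hvA rfl
                    · exact hvB rfl
                  refine ⟨e, ⟨(hmemB e).2 (by tauto), hve⟩, ?_⟩
                  rintro e' ⟨he', hve'⟩
                  rcases (hmemB e').1 he' with rfl | rfl | rfl | ⟨he'N, -⟩
                  · rw [Sym2.mem_iff] at hve'
                    rcases hve' with rfl|rfl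
                    · exact absurd rfl hva
                    · exact absurd rfl hvA
                  · rw [Sym2.mem_iff] at hve'
                    rcases hve' with rfl|rfl
                    · exact absurd rfl hvb
                    · exact absurd rfl hvB
                  · rw [Sym2.mem_iff] at hve'
                    rcases hve' with rfl|rfl
                    · exact absurd rfl hvc
                    · exact absurd rfl hvd
                  · exact uniq_edge hPM hvS he'N hve' heN hve
    · -- s(c,C) not in preimage
      intro hmem
      rcases (hmemB _).1 hmem with h | h | h | ⟨hcCN, hne⟩
      · exact ecCaA h
      · exact ecCbB h
      · exact ecCcd h
      · exact ((hstr _ hcCN hne).2 c (by rw [Sym2.mem_iff]; tauto)).2.2.1 rfl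
    · -- s(d,D) not in preimage
      intro hmem
      rcases (hmemB _).1 hmem with h | h | h | ⟨hdDN, hne⟩
      · exact edDaA h
      · exact edDbB h
      · exact edDcd h
      · exact ((hstr _ hdDN hne).2 d (by rw [Sym2.mem_iff]; tauto)).2.2.2.1 rfl
  · -- left inverse
    intro M hM
    simp only [Set.Finite.mem_toFinset, Set.mem_setOf_eq] at hM
    obtain ⟨hPM, haA, hbB, hcC, hdD⟩ := hM
    obtain ⟨hcd, -⟩ := hLstruct M hPM haA hbB hcC hdD
    obtain ⟨hedges, -⟩ := id hPM
    have hABM : s(A,B) ∉ M := fun h => nAB (adjOf _ _ (hedges _ h))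
    have hABR : s(A,B) ∉ ((M.erase s(a,A)).erase s(b,B)).erase s(c,d) := by
      intro h
      exact hABM (Finset.mem_of_mem_erase (Finset.mem_of_mem_erase (Finset.mem_of_mem_erase h)))
    rw [Finset.erase_insert hABR]
    ext e
    simp only [Finset.mem_insert, Finset.mem_erase]
    constructor
    · rintro (rfl | rfl | rfl | ⟨-,-,-,h⟩)
      exacts [haA, hbB, hcd, h]
    · intro heM
      by_cases h1 : e = s(a,A)
      · tauto
      by_cases h2 : e = s(b,B)
      · tauto
      by_cases h3 : e = s(c,d)
      · tauto
      tauto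
  · -- right inverse
    intro N hN
    simp only [Set.Finite.mem_toFinset, Set.mem_setOf_eq] at hN
    obtain ⟨hPM, hAB, hCD⟩ := hN
    have hstr := hRstruct N hPM hAB hCD
    have haAN : s(a,A) ∉ N := by
      intro h
      have hne : s(a,A) ≠ s(A,B) := by
        intro hq
        rw [Sym2.eq_iff] at hq
        rcases hq with (⟨h1,-⟩|⟨h1,-⟩)
        · exact dAa h1.symm
        · exact dBa h1.symm
      exact ((hstr _ h hne).2 a (by rw [Sym2.mem_iff]; tauto)).1 rfl
    have hbBN : s(b,B) ∉ N := by
      intro h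
      have hne : s(b,B) ≠ s(A,B) := by
        intro hq
        rw [Sym2.eq_iff] at hq
        rcases hq with (⟨h1,-⟩|⟨-,h1⟩)
        · exact dAb h1.symm
        · exact dAB h1.symm
      exact ((hstr _ h hne).2 b (by rw [Sym2.mem_iff]; tauto)).2.1 rfl
    have hcdN : s(c,d) ∉ N := by
      intro h
      have hne : s(c,d) ≠ s(A,B) := by
        intro hq
        rw [Sym2.eq_iff] at hq
        rcases hq with (⟨h1,-⟩|⟨h1,-⟩)
        · exact dAc h1.symm
        · exact dBc h1.symm
      exact ((hstr _ h hne).2 c (by rw [Sym2.mem_iff]; tauto)).2.2.1 rfl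
    have h1 : s(a,A) ∉ insert s(b,B) (insert s(c,d) (N.erase s(A,B))) := by
      simp only [Finset.mem_insert, Finset.mem_erase, not_or]
      exact ⟨eaAbB, eaAcd, fun h => haAN h.2⟩
    have h2 : s(b,B) ∉ insert s(c,d) (N.erase s(A,B)) := by
      simp only [Finset.mem_insert, Finset.mem_erase, not_or]
      exact ⟨ebBcd, fun h => hbBN h.2⟩
    have h3 : s(c,d) ∉ N.erase s(A,B) := fun h => hcdN (Finset.mem_of_mem_erase h)
    rw [Finset.erase_insert h1, Finset.erase_insert h2, Finset.erase_insert h3,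
      Finset.insert_erase hAB]
  · -- weights
    intro M hM
    simp only [Set.Finite.mem_toFinset, Set.mem_setOf_eq] at hM
    obtain ⟨hPM, haA, hbB, hcC, hdD⟩ := hM
    obtain ⟨hcd, -⟩ := hLstruct M hPM haA hbB hcC hdD
    obtain ⟨hedges, -⟩ := id hPM
    have hbB' : s(b,B) ∈ M.erase s(a,A) := Finset.mem_erase.2 ⟨eaAbB.symm, hbB⟩
    have hcd' : s(c,d) ∈ (M.erase s(a,A)).erase s(b,B) :=
      Finset.mem_erase.2 ⟨ebBcd.symm, Finset.mem_erase.2 ⟨eaAcd.symm, hcd⟩⟩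
    have hABR : s(A,B) ∉ ((M.erase s(a,A)).erase s(b,B)).erase s(c,d) := by
      intro h
      exact nAB (adjOf _ _ (hedges _
        (Finset.mem_of_mem_erase (Finset.mem_of_mem_erase (Finset.mem_of_mem_erase h)))))
    rw [← Finset.mul_prod_erase M ω haA, ← Finset.mul_prod_erase _ ω hbB',
      ← Finset.mul_prod_erase _ ω hcd', Finset.prod_insert hABR]
    have hprod : ∏ e ∈ ((M.erase s(a,A)).erase s(b,B)).erase s(c,d),
        renewWeight ω A B C D w x y z e
        = ∏ e ∈ ((M.erase s(a,A)).erase s(b,B)).erase s(c,d), ω e := by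
      refine Finset.prod_congr rfl fun e heR => ?_
      have heG : e ∈ G.edgeSet := hedges e
        (Finset.mem_of_mem_erase (Finset.mem_of_mem_erase (Finset.mem_of_mem_erase heR)))
      have n1 : e ≠ s(A,B) := by rintro rfl; exact nAB (adjOf _ _ heG)
      have n2 : e ≠ s(A,C) := by rintro rfl; exact nAC (adjOf _ _ heG)
      have n3 : e ≠ s(B,D) := by rintro rfl; exact nBD (adjOf _ _ heG)
      have n4 : e ≠ s(C,D) := by rintro rfl; exact nCD (adjOf _ _ heG)
      simp only [renewWeight, if_neg n1, if_neg n2, if_neg n3, if_neg n4]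
    have hω'AB : renewWeight ω A B C D w x y z s(A,B) = z / (w*z+x*y) := by
      simp [renewWeight]
    rw [hprod, hω'AB, waA, wbB, wcd]
    field_simp
    rw [mul_div_assoc, div_self (by rw [mul_comm z w]; exact hwz), mul_one]
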